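/- If m₁ and m₂ are closed prime ideals of C_bd(X,k) (closed with respect to the supremum-norm topology) such that F_{m₁} = F_{m₂}, then m₁ = m₂; that is, the map m ↦ F_m is injective on the set of closed prime ideals of C_bd(X,k). -/

import Mathlib

open Set Topology BoundedContinuousFunction

/-- An ultrafilter of the Boolean algebra `CO(X)` of clopen subsets of `X`: a family of
clopen sets not containing `∅`, closed under binary intersections, upward closed (within
clopen sets), and containing `U` or `Uᶜ` for every clopen `U`. -/
structure ClopenUltrafilter (X : Type*) [TopologicalSpace X] where
  sets : Set (Set X)
  isClopen_of_mem : ∀ U ∈ sets, IsClopen U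
  empty_not_mem : ∅ ∉ sets
  inter_mem : ∀ U ∈ sets, ∀ V ∈ sets, U ∩ V ∈ sets
  mem_of_superset : ∀ U ∈ sets, ∀ V : Set X, IsClopen V → U ⊆ V → V ∈ sets
  mem_or_compl_mem : ∀ U : Set X, IsClopen U → U ∈ sets ∨ Uᶜ ∈ sets

/-- The topology on `UF(X)` with open basis the sets `{F : U ∈ F}` for `U` clopen. -/
instance (X : Type*) [TopologicalSpace X] : TopologicalSpace (ClopenUltrafilter X) :=
  TopologicalSpace.generateFrom
    {S | ∃ U : Set X, IsClopen U ∧ S = {F : ClopenUltrafilter X | U ∈ F.sets}}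

/-- The principal ultrafilter of clopen sets at a point `x`. -/
def principalCU (X : Type*) [TopologicalSpace X] (x : X) : ClopenUltrafilter X where
  sets := {U : Set X | IsClopen U ∧ x ∈ U}
  isClopen_of_mem := fun _ hU => hU.1
  empty_not_mem := fun h => Set.notMem_empty x h.2
  inter_mem := fun U hU V hV => ⟨hU.1.inter hV.1, hU.2, hV.2⟩
  mem_of_superset := fun U hU V hV hUV => ⟨hV, hUV hU.2⟩
  mem_or_compl_mem := fun U hU => by
    by_cases hx : x ∈ U
    · exact Or.inl ⟨hU, hx⟩
    · exact Or.inr ⟨hU.compl, hx⟩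

/-- A cluster point of an ultrafilter of clopen sets: a point all of whose clopen
neighbourhoods belong to the ultrafilter. -/
def ClopenUltrafilter.IsClusterPoint {X : Type*} [TopologicalSpace X]
    (F : ClopenUltrafilter X) (x : X) : Prop :=
  ∀ U : Set X, IsClopen U → x ∈ U → U ∈ F.sets

/-- The indicator function of a clopen set, as a bounded continuous `k`-valued function. -/
noncomputable def indicatorBCF {X : Type*} [TopologicalSpace X] (k : Type*) [NormedField k]
    {U : Set X} (hU : IsClopen U) : BoundedContinuousFunction X k where
  toFun := U.indicator 1
  continuous_toFun := continuous_indicator (by simp [hU]) continuous_const.continuousOn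
  map_bounded' := ⟨1, fun x y => by
    by_cases hx : x ∈ U <;> by_cases hy : y ∈ U <;>
      simp [hx, hy, dist_eq_norm, Set.indicator_of_mem, Set.indicator_of_notMem]⟩

/-- The family `F_m = {U ∈ CO(X) : 1_U ∉ m}` attached to an ideal `m` of `C_bd(X,k)`. -/
def idealUF {X : Type*} [TopologicalSpace X] (k : Type*) [NormedField k]
    (m : Ideal (BoundedContinuousFunction X k)) : Set (Set X) :=
  {U : Set X | ∃ hU : IsClopen U, indicatorBCF k hU ∉ m}

/-- `‖f‖_F = inf_{U ∈ F} sup_{x ∈ U} ‖f x‖`. -/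
noncomputable def ufSeminorm {X : Type*} [TopologicalSpace X] (k : Type*) [NormedField k]
    (F : ClopenUltrafilter X) (f : BoundedContinuousFunction X k) : ℝ :=
  ⨅ U ∈ F.sets, ⨆ x ∈ U, ‖f x‖

theorem le_of_idealUF_le {X : Type*} [TopologicalSpace X]
    (k : Type*) [NormedField k] [IsUltrametricDist k]
    (m₁ m₂ : Ideal (BoundedContinuousFunction X k))
    (hc₂ : IsClosed (m₂ : Set (BoundedContinuousFunction X k)))
    (h : idealUF k m₁ = idealUF k m₂) : m₁ ≤ m₂ := by
  intro f hf
  have : f ∈ closure (m₂ : Set (BoundedContinuousFunction X k)) := by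
    rw [Metric.mem_closure_iff]
    intro ε hε
    have hε2 : (0:ℝ) < ε / 2 := by linarith
    set V : Set X := (f ⁻¹' Metric.closedBall 0 (ε/2))ᶜ with hVdef
    have hV : IsClopen V :=
      ((IsUltrametricDist.isClopen_closedBall (0:k) hε2.ne').preimage f.continuous).compl
    have hmemV : ∀ x, x ∈ V ↔ ε/2 < ‖f x‖ := by
      intro x
      simp [hVdef, Metric.mem_closedBall, dist_zero_right, not_le]
    have hne : ∀ x ∈ V, f x ≠ 0 := by
      intro x hx h0
      have := (hmemV x).1 hx
      rw [h0] at this; simp at this; linarith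
    -- the inverse function
    set g : BoundedContinuousFunction X k :=
      { toFun := V.indicator (fun x => (f x)⁻¹)
        continuous_toFun := continuous_indicator (by simp [hV])
          (by
            rw [hV.isClosed.closure_eq]
            exact ContinuousOn.inv₀ f.continuous.continuousOn hne)
        map_bounded' := by
          refine ⟨2 * (2/ε), fun x y => ?_⟩
          have key : ∀ z, ‖V.indicator (fun x => (f x)⁻¹) z‖ ≤ 2/ε := by
            intro z
            by_cases hz : z ∈ V
            · rw [Set.indicator_of_mem hz, norm_inv, show (2:ℝ)/ε = (ε/2)⁻¹ by rw [inv_div]]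
              exact inv_anti₀ hε2 ((hmemV z).1 hz).le
            · rw [Set.indicator_of_notMem hz, norm_zero]
              positivity
          calc dist _ _ ≤ ‖_‖ + ‖_‖ := dist_le_norm_add_norm _ _
            _ ≤ 2/ε + 2/ε := add_le_add (key x) (key y)
            _ = 2 * (2/ε) := by ring } with hgdef
    have hindg : ∀ x, g x = V.indicator (fun y => (f y)⁻¹) x := fun _ => rfl
    have hind : ∀ x, indicatorBCF k hV x = V.indicator 1 x := fun _ => rfl
    have hfg : f * g = indicatorBCF k hV := by
      ext x
      rw [BoundedContinuousFunction.mul_apply, hindg, hind]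
      by_cases hx : x ∈ V
      · simp [Set.indicator_of_mem hx, mul_inv_cancel₀ (hne x hx)]
      · simp [Set.indicator_of_notMem hx]
    have h1V : indicatorBCF k hV ∈ m₁ := hfg ▸ Ideal.mul_mem_right _ _ hf
    have hnot : V ∉ idealUF k m₁ := by
      rintro ⟨hV', hmem⟩
      exact hmem h1V
    rw [h] at hnot
    have h2V : indicatorBCF k hV ∈ m₂ := by
      by_contra hcon
      exact hnot ⟨hV, hcon⟩
    refine ⟨f * indicatorBCF k hV, Ideal.mul_mem_left _ _ h2V, ?_⟩
    have : dist f (f * indicatorBCF k hV) ≤ ε/2 := by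
      rw [dist_eq_norm]
      refine (BoundedContinuousFunction.norm_le hε2.le).2 fun x => ?_
      rw [BoundedContinuousFunction.sub_apply, BoundedContinuousFunction.mul_apply, hind]
      by_cases hx : x ∈ V
      · simp only [Set.indicator_of_mem hx, Pi.one_apply, mul_one, sub_self, norm_zero]
        positivity
      · have hfx : ‖f x‖ ≤ ε/2 := by
          by_contra hcon
          exact hx ((hmemV x).2 (not_le.1 hcon))
        simpa [Set.indicator_of_notMem hx] using hfx
    linarith
  rwa [hc₂.closure_eq] at this

/-- If `m₁` and `m₂` are closed prime ideals of `C_bd(X,k)` with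
`F_{m₁} = F_{m₂}`, then `m₁ = m₂`; the map `m ↦ F_m` is injective on closed prime ideals. -/
theorem idealUF_injective_on_closed_primes {X : Type*} [TopologicalSpace X]
    (k : Type*) [NormedField k] [CompleteSpace k] [IsUltrametricDist k]
    (m₁ m₂ : Ideal (BoundedContinuousFunction X k)) (h₁ : m₁.IsPrime) (h₂ : m₂.IsPrime)
    (hc₁ : IsClosed (m₁ : Set (BoundedContinuousFunction X k)))
    (hc₂ : IsClosed (m₂ : Set (BoundedContinuousFunction X k)))
    (h : idealUF k m₁ = idealUF k m₂) : m₁ = m₂ :=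
  le_antisymm (le_of_idealUF_le k m₁ m₂ hc₂ h) (le_of_idealUF_le k m₂ m₁ hc₁ h.symm)
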